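/- Let 𝒜 be a Banach algebra, G, P ∈ 𝒜, and θ a square-zero element commuting with 𝒜 (in 𝒜 ⊗ Λ(ℝ)). Then exp(−t(G + θP)) − exp(−tG) is θ times an element of 𝒜 whose norm is at most t·‖P‖·e^{2t‖G‖}; in particular the map P ↦ (θ-coefficient of exp(−t(G+θP))) is linear in P. -/

import Mathlib

/-- Multiplication in `𝒜 ⊗ Λ(ℝ)` (central square-zero generator `θ` adjoined):
an element `X + θY` is encoded as the pair `(X, Y)`. -/
def grassMul {𝒜 : Type*} [Ring 𝒜] (x y : 𝒜 × 𝒜) : 𝒜 × 𝒜 :=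
  (x.1 * y.1, x.1 * y.2 + x.2 * y.1)

/-- Powers in `𝒜 ⊗ Λ(ℝ)`. -/
def grassPow {𝒜 : Type*} [Ring 𝒜] (x : 𝒜 × 𝒜) : ℕ → 𝒜 × 𝒜
  | 0 => (1, 0)
  | n + 1 => grassMul (grassPow x n) x

/-- The exponential `exp(-t(G + θP))` in `𝒜 ⊗ Λ(ℝ)`, defined by its power series. -/
noncomputable def grassExp {𝒜 : Type*} [NormedRing 𝒜] [NormedAlgebra ℂ 𝒜]
    (t : ℝ) (G P : 𝒜) : 𝒜 × 𝒜 :=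
  ∑' n : ℕ, ((n.factorial : ℂ))⁻¹ • grassPow ((-(t : ℂ)) • ((G, P) : 𝒜 × 𝒜)) n

section Aux

variable {𝒜 : Type*}

lemma grassPow_fst [Ring 𝒜] (A B : 𝒜) (n : ℕ) : (grassPow ((A, B) : 𝒜 × 𝒜) n).1 = A ^ n := by
  induction n with
  | zero => simp [grassPow]
  | succ n ih => simp [grassPow, grassMul, ih, pow_succ]

lemma grassPow_snd [Ring 𝒜] (A B : 𝒜) (n : ℕ) :
    (grassPow ((A, B) : 𝒜 × 𝒜) n).2 = ∑ i ∈ Finset.range n, A ^ i * B * A ^ (n - 1 - i) := by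
  induction n with
  | zero => simp [grassPow]
  | succ n ih =>
    rw [Finset.sum_range_succ]
    simp only [grassPow, grassMul, ih, grassPow_fst]
    rw [Finset.sum_mul]
    rw [add_comm]
    congr 1
    · refine Finset.sum_congr rfl fun i hi => ?_
      rw [Finset.mem_range] at hi
      rw [mul_assoc, ← pow_succ]
      congr 2
      omega
    · simp

lemma norm_pow_mul_mul_pow_le [NormedRing 𝒜] (A B : 𝒜) (i j : ℕ) :
    ‖A ^ i * B * A ^ j‖ ≤ ‖A‖ ^ i * ‖B‖ * ‖A‖ ^ j := by
  rcases Nat.eq_zero_or_pos i with hi | hi <;> rcases Nat.eq_zero_or_pos j with hj | hj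
  · simp [hi, hj]
  · subst hi
    simpa using (norm_mul_le B (A ^ j)).trans
      (mul_le_mul_of_nonneg_left (norm_pow_le' A hj) (norm_nonneg B))
  · subst hj
    simpa using (norm_mul_le (A ^ i) B).trans
      (mul_le_mul_of_nonneg_right (norm_pow_le' A hi) (norm_nonneg B))
  · have h1 : ‖A ^ i * B * A ^ j‖ ≤ ‖A ^ i‖ * ‖B‖ * ‖A ^ j‖ :=
      (norm_mul_le _ _).trans
        (mul_le_mul_of_nonneg_right (norm_mul_le _ _) (norm_nonneg _))
    refine h1.trans ?_
    gcongr
    · exact norm_pow_le' A hi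
    · exact norm_pow_le' A hj

variable [NormedRing 𝒜] [NormedAlgebra ℂ 𝒜]

/-- The `n`-th term of the series for the θ-component of the Grassmann exponential. -/
noncomputable def sndSeries (A B : 𝒜) (n : ℕ) : 𝒜 :=
  ((n.factorial : ℂ))⁻¹ • ∑ i ∈ Finset.range n, A ^ i * B * A ^ (n - 1 - i)

/-- A summable bound for `sndSeries`. -/
noncomputable def sndBound (A B : 𝒜) : ℕ → ℝ
  | 0 => 0
  | n + 1 => ‖B‖ * (‖A‖ ^ n / n.factorial)

lemma sndBound_nonneg (A B : 𝒜) (n : ℕ) : 0 ≤ sndBound A B n := by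
  cases n with
  | zero => simp [sndBound]
  | succ n =>
    simp only [sndBound]
    positivity

lemma sndBound_summable (A B : 𝒜) : Summable (sndBound A B) := by
  rw [← summable_nat_add_iff 1]
  simpa [sndBound] using (Real.summable_pow_div_factorial ‖A‖).mul_left ‖B‖

lemma tsum_sndBound (A B : 𝒜) : ∑' n, sndBound A B n = ‖B‖ * Real.exp ‖A‖ := by
  rw [Summable.tsum_eq_zero_add (sndBound_summable A B)]
  simp only [sndBound, zero_add]
  rw [tsum_mul_left]
  congr 1
  rw [Real.exp_eq_exp_ℝ, NormedSpace.exp_eq_tsum_div]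

lemma norm_sndSeries_le (A B : 𝒜) (n : ℕ) : ‖sndSeries A B n‖ ≤ sndBound A B n := by
  cases n with
  | zero => simp [sndSeries, sndBound]
  | succ n =>
    have hterm : ∀ i ∈ Finset.range (n + 1),
        ‖A ^ i * B * A ^ (n + 1 - 1 - i)‖ ≤ ‖B‖ * ‖A‖ ^ n := by
      intro i hi
      rw [Finset.mem_range] at hi
      refine (norm_pow_mul_mul_pow_le A B i _).trans (le_of_eq ?_)
      have hexp : n + 1 - 1 - i = n - i := rfl
      rw [hexp, mul_right_comm, ← pow_add]
      have hni : i + (n - i) = n := by omega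
      rw [hni]
      exact mul_comm _ _
    have hS : ‖∑ i ∈ Finset.range (n + 1), A ^ i * B * A ^ (n + 1 - 1 - i)‖
        ≤ (n + 1) * (‖B‖ * ‖A‖ ^ n) := by
      refine (norm_sum_le _ _).trans ?_
      calc ∑ i ∈ Finset.range (n + 1), ‖A ^ i * B * A ^ (n + 1 - 1 - i)‖
          ≤ ∑ _i ∈ Finset.range (n + 1), ‖B‖ * ‖A‖ ^ n := Finset.sum_le_sum hterm
        _ = (n + 1) * (‖B‖ * ‖A‖ ^ n) := by
            rw [Finset.sum_const, Finset.card_range, nsmul_eq_mul]; push_cast; ring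
    rw [sndSeries, norm_smul]
    have hnorm : ‖((n + 1).factorial : ℂ)⁻¹‖ = (((n + 1).factorial : ℝ))⁻¹ := by
      rw [norm_inv, Complex.norm_natCast]
    rw [hnorm]
    calc (((n + 1).factorial : ℝ))⁻¹ * ‖∑ i ∈ Finset.range (n + 1), A ^ i * B * A ^ (n + 1 - 1 - i)‖
        ≤ (((n + 1).factorial : ℝ))⁻¹ * ((n + 1) * (‖B‖ * ‖A‖ ^ n)) := by
          have : (0 : ℝ) ≤ (((n + 1).factorial : ℝ))⁻¹ := by positivity
          exact mul_le_mul_of_nonneg_left hS this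
      _ = sndBound A B (n + 1) := by
          simp only [sndBound, Nat.factorial_succ]
          have h1 : ((n.factorial : ℝ)) ≠ 0 := by positivity
          push_cast
          field_simp

lemma sndSeries_summable [CompleteSpace 𝒜] (A B : 𝒜) : Summable (sndSeries A B) :=
  Summable.of_norm_bounded (sndBound_summable A B) (norm_sndSeries_le A B)

lemma norm_tsum_sndSeries_le [CompleteSpace 𝒜] (A B : 𝒜) :
    ‖∑' n, sndSeries A B n‖ ≤ ‖B‖ * Real.exp ‖A‖ := by
  have hnorms : Summable fun n => ‖sndSeries A B n‖ :=
    Summable.of_nonneg_of_le (fun n => norm_nonneg _) (norm_sndSeries_le A B)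
      (sndBound_summable A B)
  refine (norm_tsum_le_tsum_norm hnorms).trans ?_
  rw [← tsum_sndBound A B]
  exact Summable.tsum_le_tsum (norm_sndSeries_le A B) hnorms (sndBound_summable A B)

lemma sndSeries_add (A B C : 𝒜) (n : ℕ) :
    sndSeries A (B + C) n = sndSeries A B n + sndSeries A C n := by
  simp [sndSeries, mul_add, add_mul, Finset.sum_add_distrib]

lemma sndSeries_smul (A B : 𝒜) (c : ℂ) (n : ℕ) :
    sndSeries A (c • B) n = c • sndSeries A B n := by
  simp only [sndSeries, mul_smul_comm, smul_mul_assoc, ← Finset.smul_sum]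
  rw [smul_comm]

lemma grassExp_eq [CompleteSpace 𝒜] (t : ℝ) (G P : 𝒜) :
    grassExp t G P = (NormedSpace.exp ((-(t : ℂ)) • G),
      ∑' n, sndSeries ((-(t : ℂ)) • G) ((-(t : ℂ)) • P) n) := by
  set A : 𝒜 := (-(t : ℂ)) • G with hA
  set B : 𝒜 := (-(t : ℂ)) • P with hB
  have h1 : HasSum (fun n : ℕ => ((n.factorial : ℂ))⁻¹ • A ^ n) (NormedSpace.exp A) := by
    rw [NormedSpace.exp_eq_tsum ℂ]
    exact (NormedSpace.expSeries_summable' (𝕂 := ℂ) A).hasSum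
  have h2 : HasSum (sndSeries A B) (∑' n, sndSeries A B n) := (sndSeries_summable A B).hasSum
  have h3 := h1.prodMk h2
  have h4 : ∀ n : ℕ, ((n.factorial : ℂ))⁻¹ • grassPow ((-(t : ℂ)) • ((G, P) : 𝒜 × 𝒜)) n
      = (((n.factorial : ℂ))⁻¹ • A ^ n, sndSeries A B n) := by
    intro n
    have hpair : (-(t : ℂ)) • ((G, P) : 𝒜 × 𝒜) = (A, B) := rfl
    rw [hpair]
    refine Prod.ext ?_ ?_
    · simp [Prod.smul_def, grassPow_fst]
    · simp [Prod.smul_def, grassPow_snd, sndSeries]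
  rw [grassExp]
  simp_rw [h4]
  exact h3.tsum_eq

end Aux

/-- In a Banach algebra `𝒜`, `exp(-t(G+θP)) - exp(-tG)` is `θ` times an element of `𝒜`
of norm at most `t‖P‖e^{2t‖G‖}`; in particular the θ-coefficient (Berezin integral) of
`exp(-t(G+θP))` is linear in `P`. -/
theorem grassExp_difference_bound {𝒜 : Type*} [NormedRing 𝒜] [NormedAlgebra ℂ 𝒜]
    [CompleteSpace 𝒜] (G P : 𝒜) (t : ℝ) (ht : 0 ≤ t) :
    (grassExp t G P).1 = NormedSpace.exp ((-(t : ℂ)) • G) ∧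
    ‖(grassExp t G P).2‖ ≤ t * ‖P‖ * Real.exp (2 * t * ‖G‖) ∧
    IsLinearMap ℂ (fun P' : 𝒜 => (grassExp t G P').2) := by
  have hnormt : ‖(-(t : ℂ))‖ = t := by
    simp [abs_of_nonneg ht]
  refine ⟨?_, ?_, ?_, ?_⟩
  · rw [grassExp_eq]
  · rw [grassExp_eq]
    refine (norm_tsum_sndSeries_le _ _).trans ?_
    rw [norm_smul, norm_smul, hnormt]
    have h1 : t * ‖G‖ ≤ 2 * t * ‖G‖ := by nlinarith [norm_nonneg G]
    have h2 : Real.exp (t * ‖G‖) ≤ Real.exp (2 * t * ‖G‖) := Real.exp_le_exp.mpr h1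
    have h3 : 0 ≤ t * ‖P‖ := by positivity
    calc t * ‖P‖ * Real.exp (t * ‖G‖) ≤ t * ‖P‖ * Real.exp (2 * t * ‖G‖) :=
          mul_le_mul_of_nonneg_left h2 h3
      _ = t * ‖P‖ * Real.exp (2 * t * ‖G‖) := rfl
  · intro x y
    simp only [grassExp_eq]
    rw [smul_add]
    simp_rw [sndSeries_add]
    exact Summable.tsum_add (sndSeries_summable _ _) (sndSeries_summable _ _)
  · intro c x
    simp only [grassExp_eq]
    have hs : ∀ n, sndSeries ((-(t : ℂ)) • G) ((-(t : ℂ)) • (c • x)) n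
        = c • sndSeries ((-(t : ℂ)) • G) ((-(t : ℂ)) • x) n := by
      intro n
      rw [smul_comm (-(t : ℂ)) c, sndSeries_smul]
    rw [tsum_congr hs]
    exact Summable.tsum_const_smul (α := 𝒜) c (sndSeries_summable ((-(t : ℂ)) • G) ((-(t : ℂ)) • x))
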